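/- Let n ≥ 4 be an even integer and k ≥ 1, and let (u_1,…,u_k) ∈ {1,…,n}^k. Then the 2k points p_{1 u_1}, p_{1 ū_1}, p_{2 u_2}, p_{2 ū_2}, …, p_{k u_k}, p_{k ū_k} in ℝ^{2k} are affinely independent; consequently there is a unique affine hyperplane H(u_1,…,u_k) of ℝ^{2k} containing all of them. -/

import Mathlib

open scoped RealInnerProductSpace
open Real

/-- The scaffolding point `p_{iu}` in `ℝ^{2k}`: its `i`-th coordinate pair is
`(cos((u−1)·2π/n), sin((u−1)·2π/n))` and its other coordinates are `0`. -/
noncomputable def scafPt (n k : ℕ) (i : Fin k) (u : ℕ) :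
    EuclideanSpace ℝ (Fin (2 * k)) :=
  (WithLp.equiv 2 (Fin (2 * k) → ℝ)).symm fun idx =>
    if (idx : ℕ) = 2 * (i : ℕ) then Real.cos (((u : ℝ) - 1) * (2 * Real.pi) / n)
    else if (idx : ℕ) = 2 * (i : ℕ) + 1 then Real.sin (((u : ℝ) - 1) * (2 * Real.pi) / n)
    else 0

/-- The scaffolding point set `P = {p_{iu} : 1 ≤ i ≤ k, 1 ≤ u ≤ n}`. -/
noncomputable def scafSet (n k : ℕ) : Set (EuclideanSpace ℝ (Fin (2 * k))) :=
  {x | ∃ i : Fin k, ∃ u ∈ Finset.Icc 1 n, x = scafPt n k i u}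

/-- The antipodal partner `u' ∈ {1,…,n}` of `u ∈ {1,…,n}`: the unique element of
`{1,…,n}` congruent to `u + n/2` modulo `n`. -/
def antip (n u : ℕ) : ℕ := (u - 1 + n / 2) % n + 1

/-- The almost antipodal partner `ū ∈ {1,…,n}` of `u ∈ {1,…,n}`: the unique element of
`{1,…,n}` congruent to `u + n/2 + 1` modulo `n`. -/
def almostAntip (n u : ℕ) : ℕ := (u - 1 + n / 2 + 1) % n + 1

/-- The half of the scaffolding set selected by a tuple `(u_1,…,u_k) ∈ {1,…,n}^k`:
`P(u_1,…,u_k) = {p_{it} : 1 ≤ i ≤ k, t ∈ {1,…,n}, t ≡ u_i − s (mod n)` for some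
`s ∈ {0,…,n/2−1}}`. -/
noncomputable def scafHalf (n k : ℕ) (U : Fin k → ℕ) :
    Set (EuclideanSpace ℝ (Fin (2 * k))) :=
  {x | ∃ i : Fin k, ∃ t ∈ Finset.Icc 1 n,
    (∃ s < n / 2, t + s ≡ U i [MOD n]) ∧ x = scafPt n k i t}

/-- The affine hyperplane `{x : ⟪a, x⟫ = b}`. -/
def hyp {k : ℕ} (a : EuclideanSpace ℝ (Fin (2 * k))) (b : ℝ) :
    Set (EuclideanSpace ℝ (Fin (2 * k))) := {x | ⟪a, x⟫ = b}

/-- The family of `2k` points `p_{1u_1}, p_{1ū_1}, …, p_{ku_k}, p_{kū_k}` indexed by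
`Fin (2k)`: the `(2m)`-th point is `p_{m u_m}` and the `(2m+1)`-th is `p_{m ū_m}`. -/
noncomputable def boundaryPts (n k : ℕ) (U : Fin k → ℕ) (m : Fin (2 * k)) :
    EuclideanSpace ℝ (Fin (2 * k)) :=
  let i : Fin k := ⟨(m : ℕ) / 2, by have := m.2; omega⟩
  if (m : ℕ) % 2 = 0 then scafPt n k i (U i) else scafPt n k i (almostAntip n (U i))


section Aux

lemma scafPt_apply' (n k : ℕ) (i : Fin k) (u : ℕ) (idx : Fin (2*k)) :
    scafPt n k i u idx =
    (if (idx : ℕ) = 2 * (i : ℕ) then Real.cos (((u : ℝ) - 1) * (2 * Real.pi) / n)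
    else if (idx : ℕ) = 2 * (i : ℕ) + 1 then Real.sin (((u : ℝ) - 1) * (2 * Real.pi) / n)
    else 0) := rfl

lemma scafPt_zero' (n k : ℕ) (i : Fin k) (u : ℕ) (idx : Fin (2*k))
    (h1 : (idx : ℕ) ≠ 2 * (i:ℕ)) (h2 : (idx : ℕ) ≠ 2 * (i:ℕ) + 1) :
    scafPt n k i u idx = 0 := by
  rw [scafPt_apply', if_neg h1, if_neg h2]

lemma sin_det_ne (n u : ℕ) (hn : 4 ≤ n) (hneven : Even n) (hu1 : 1 ≤ u) (_hun : u ≤ n) :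
    Real.sin (((almostAntip n u : ℝ) - 1) * (2 * Real.pi) / n) *
      Real.cos (((u : ℝ) - 1) * (2 * Real.pi) / n) -
    Real.cos (((almostAntip n u : ℝ) - 1) * (2 * Real.pi) / n) *
      Real.sin (((u : ℝ) - 1) * (2 * Real.pi) / n) ≠ 0 := by
  set θ := ((u : ℝ) - 1) * (2 * Real.pi) / n
  set φ := ((almostAntip n u : ℝ) - 1) * (2 * Real.pi) / n
  rw [← Real.sin_sub]
  have hn0 : (n : ℝ) ≠ 0 := by positivity
  set a : ℕ := u - 1 + n / 2 + 1 with ha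
  set q : ℕ := a / n with hq
  have hcast : ((a % n : ℕ) : ℝ) = (a : ℝ) - n * q := by
    have h0 := Nat.mod_add_div a n
    have h1 : a % n = a - n * (a / n) := by omega
    have h2 : n * (a / n) ≤ a := Nat.mul_div_le a n
    rw [hq, h1, Nat.cast_sub h2, Nat.cast_mul]
  obtain ⟨c, hc⟩ := hneven
  have hcR : (c : ℝ) = (n : ℝ) / 2 := by
    have : (n : ℝ) = c + c := by exact_mod_cast congrArg Nat.cast hc
    linarith
  have haR : (a : ℝ) = (u : ℝ) - 1 + (n : ℝ) / 2 + 1 := by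
    have h3 : a = (u - 1) + c + 1 := by omega
    rw [h3]
    push_cast [Nat.cast_sub hu1]
    rw [hcR]
  have hAA : ((almostAntip n u : ℕ) : ℝ) = (a : ℝ) - n * q + 1 := by
    unfold almostAntip
    rw [← ha, Nat.cast_add, Nat.cast_one, hcast]
  have hφ : φ - θ = (2 * Real.pi / n + Real.pi) - q * (2 * Real.pi) := by
    simp only [φ, θ, hAA, haR]
    field_simp
    ring
  rw [hφ, Real.sin_periodic.sub_nat_mul_eq, Real.sin_add_pi]
  have hpos : 0 < Real.sin (2 * Real.pi / n) := by
    apply Real.sin_pos_of_pos_of_lt_pi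
    · positivity
    · rw [div_lt_iff₀ (by positivity)]
      have h4 : (4:ℝ) ≤ n := by exact_mod_cast hn
      nlinarith [Real.pi_pos, mul_le_mul_of_nonneg_left h4 Real.pi_pos.le]
  linarith

lemma boundaryPts_eq_scafPt (n k : ℕ) (U : Fin k → ℕ) (m : Fin (2*k)) (hi : (m:ℕ)/2 < k) :
    boundaryPts n k U m =
      scafPt n k ⟨(m:ℕ)/2, hi⟩
        (if (m : ℕ) % 2 = 0 then U ⟨(m:ℕ)/2, hi⟩ else almostAntip n (U ⟨(m:ℕ)/2, hi⟩)) := by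
  unfold boundaryPts
  split <;> simp_all

lemma boundaryPts_zero (n k : ℕ) (U : Fin k → ℕ) (m idx : Fin (2*k))
    (h : (m : ℕ) / 2 ≠ (idx : ℕ) / 2) : boundaryPts n k U m idx = 0 := by
  have h2 := m.2
  rw [boundaryPts_eq_scafPt n k U m (by omega)]
  exact scafPt_zero' _ _ _ _ _ (show (idx:ℕ) ≠ 2 * ((m:ℕ)/2) by omega)
    (show (idx:ℕ) ≠ 2 * ((m:ℕ)/2) + 1 by omega)

lemma boundaryPts_linearIndependent (n k : ℕ) (hn : 4 ≤ n) (hneven : Even n)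
    (U : Fin k → ℕ) (hU : ∀ m, U m ∈ Finset.Icc 1 n) :
    LinearIndependent ℝ (boundaryPts n k U) := by
  rw [Fintype.linearIndependent_iff]
  intro g hg
  have happ : ∀ idx : Fin (2*k), ∑ m, g m * boundaryPts n k U m idx = 0 := by
    intro idx
    classical
    let L : EuclideanSpace ℝ (Fin (2*k)) →ₗ[ℝ] ℝ :=
      (LinearMap.proj idx).comp (WithLp.linearEquiv 2 ℝ (Fin (2*k) → ℝ)).toLinearMap
    have h := congrArg L hg
    rw [map_sum, map_zero] at h
    simpa [L, smul_eq_mul] using h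
  have key : ∀ i : Fin k, ∀ (h0 : 2*(i:ℕ) < 2*k) (h1 : 2*(i:ℕ)+1 < 2*k),
      g ⟨2*(i:ℕ), h0⟩ = 0 ∧ g ⟨2*(i:ℕ)+1, h1⟩ = 0 := by
    intro i h0 h1
    set m0 : Fin (2*k) := ⟨2*(i:ℕ), h0⟩ with hm0
    set m1 : Fin (2*k) := ⟨2*(i:ℕ)+1, h1⟩ with hm1
    set θ := ((U i : ℝ) - 1) * (2 * Real.pi) / n with hθ
    set φ := ((almostAntip n (U i) : ℝ) - 1) * (2 * Real.pi) / n with hφ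
    have hne : m0 ≠ m1 := by simp [hm0, hm1, Fin.ext_iff]
    have hsum : ∀ idx : Fin (2*k), (idx:ℕ)/2 = (i:ℕ) →
        g m0 * boundaryPts n k U m0 idx + g m1 * boundaryPts n k U m1 idx = 0 := by
      intro idx hidx
      have h := happ idx
      rwa [← Finset.sum_subset (Finset.subset_univ {m0, m1})
        (fun m _ hm => by
          rw [boundaryPts_zero n k U m idx]
          · ring
          · simp only [Finset.mem_insert, Finset.mem_singleton, hm0, hm1, Fin.ext_iff,
              Fin.val_mk] at hm
            push_neg at hm
            omega),
        Finset.sum_pair hne] at h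
    have hd0 : (m0:ℕ)/2 < k := by omega
    have hd1 : (m1:ℕ)/2 < k := by omega
    have hi0 : (⟨(m0:ℕ)/2, hd0⟩ : Fin k) = i := by
      apply Fin.ext; show 2*(i:ℕ)/2 = (i:ℕ); omega
    have hi1 : (⟨(m1:ℕ)/2, hd1⟩ : Fin k) = i := by
      apply Fin.ext; show (2*(i:ℕ)+1)/2 = (i:ℕ); omega
    have hB0 : boundaryPts n k U m0 = scafPt n k i (U i) := by
      rw [boundaryPts_eq_scafPt n k U m0 hd0, hi0, if_pos (show 2*(i:ℕ) % 2 = 0 by omega)]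
    have hB1 : boundaryPts n k U m1 = scafPt n k i (almostAntip n (U i)) := by
      rw [boundaryPts_eq_scafPt n k U m1 hd1, hi1,
        if_neg (show ¬((2*(i:ℕ)+1) % 2 = 0) by omega)]
    have e1 := hsum ⟨2*(i:ℕ), h0⟩ (by show 2*(i:ℕ)/2 = (i:ℕ); omega)
    have e2 := hsum ⟨2*(i:ℕ)+1, h1⟩ (by show (2*(i:ℕ)+1)/2 = (i:ℕ); omega)
    rw [hB0, hB1, scafPt_apply', scafPt_apply', if_pos (show 2*(i:ℕ) = 2*(i:ℕ) from rfl),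
      if_pos (show 2*(i:ℕ) = 2*(i:ℕ) from rfl)] at e1
    rw [hB0, hB1, scafPt_apply', scafPt_apply',
      if_neg (show ¬(2*(i:ℕ)+1 = 2*(i:ℕ)) by omega),
      if_neg (show ¬(2*(i:ℕ)+1 = 2*(i:ℕ)) by omega),
      if_pos (show 2*(i:ℕ)+1 = 2*(i:ℕ)+1 from rfl),
      if_pos (show 2*(i:ℕ)+1 = 2*(i:ℕ)+1 from rfl)] at e2
    rw [← hθ, ← hφ] at e1 e2
    have hU' := hU i
    rw [Finset.mem_Icc] at hU'
    have hD := sin_det_ne n (U i) hn hneven hU'.1 hU'.2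
    rw [← hθ, ← hφ] at hD
    constructor
    · have h : g m0 * (Real.sin φ * Real.cos θ - Real.cos φ * Real.sin θ) = 0 := by
        linear_combination Real.sin φ * e1 - Real.cos φ * e2
      exact (mul_eq_zero.mp h).resolve_right hD
    · have h : g m1 * (Real.sin φ * Real.cos θ - Real.cos φ * Real.sin θ) = 0 := by
        linear_combination Real.cos θ * e2 - Real.sin θ * e1
      exact (mul_eq_zero.mp h).resolve_right hD
  intro m
  have h2 := m.2
  have hi : (m:ℕ)/2 < k := by omega
  have hpar := Nat.mod_two_eq_zero_or_one (m:ℕ)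
  obtain ⟨hg0, hg1⟩ := key ⟨(m:ℕ)/2, hi⟩
    (show 2*((m:ℕ)/2) < 2*k by omega) (show 2*((m:ℕ)/2)+1 < 2*k by omega)
  rcases hpar with he | ho
  · have : m = ⟨2*((m:ℕ)/2), by omega⟩ := by apply Fin.ext; show (m:ℕ) = 2*((m:ℕ)/2); omega
    rw [this]; exact hg0
  · have : m = ⟨2*((m:ℕ)/2)+1, by omega⟩ := by
      apply Fin.ext; show (m:ℕ) = 2*((m:ℕ)/2)+1; omega
    rw [this]; exact hg1

lemma main_of_linearIndependent (k : ℕ) (hk : 1 ≤ k)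
    (p : Fin (2*k) → EuclideanSpace ℝ (Fin (2*k)))
    (hlin : LinearIndependent ℝ p) :
    AffineIndependent ℝ p
    ∧ ∃! H : Set (EuclideanSpace ℝ (Fin (2 * k))),
        (∃ (a : EuclideanSpace ℝ (Fin (2 * k))) (b : ℝ), a ≠ 0 ∧ H = hyp a b)
        ∧ ∀ m : Fin (2 * k), p m ∈ H := by
  have haff : AffineIndependent ℝ p := by
    rw [affineIndependent_iff]
    intro s w hw hsum i hi
    exact linearIndependent_iff'.mp hlin s w hsum i hi
  refine ⟨haff, ?_⟩
  haveI : Nonempty (Fin (2*k)) := ⟨⟨0, by omega⟩⟩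
  have hcard : Fintype.card (Fin (2*k)) =
      Module.finrank ℝ (EuclideanSpace ℝ (Fin (2*k))) := by
    simp [finrank_euclideanSpace]
  let B : Module.Basis (Fin (2*k)) ℝ (EuclideanSpace ℝ (Fin (2*k))) :=
    basisOfLinearIndependentOfCardEqFinrank hlin hcard
  have hB : ⇑B = p := coe_basisOfLinearIndependentOfCardEqFinrank hlin hcard
  let L : EuclideanSpace ℝ (Fin (2*k)) →L[ℝ] ℝ :=
    LinearMap.toContinuousLinearMap B.sumCoords
  let a : EuclideanSpace ℝ (Fin (2*k)) := (InnerProductSpace.toDual ℝ _).symm L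
  have ha : ∀ x, ⟪a, x⟫ = B.sumCoords x := fun x => InnerProductSpace.toDual_symm_apply
  have haB : ∀ m, ⟪a, p m⟫ = 1 := by
    intro m
    rw [ha, ← hB, Module.Basis.sumCoords_self_apply]
  have ha0 : a ≠ 0 := by
    intro h
    have := haB ⟨0, by omega⟩
    rw [h, inner_zero_left] at this
    exact one_ne_zero this.symm
  refine ⟨hyp a 1, ⟨⟨a, 1, ha0, rfl⟩, fun m => haB m⟩, ?_⟩
  rintro H ⟨⟨a', b', ha', rfl⟩, hmem⟩
  have hfun : ∀ x, ⟪a', x⟫ = b' * ⟪a, x⟫ := by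
    have heq : (innerSL ℝ a' : EuclideanSpace ℝ (Fin (2*k)) →ₗ[ℝ] ℝ)
        = b' • ((innerSL ℝ a : EuclideanSpace ℝ (Fin (2*k)) →ₗ[ℝ] ℝ)) := by
      apply B.ext
      intro m
      simp only [LinearMap.smul_apply, ContinuousLinearMap.coe_coe, innerSL_apply_apply, hB,
        smul_eq_mul]
      rw [hmem m, haB m, mul_one]
    intro x
    have := LinearMap.congr_fun heq x
    simpa using this
  have hb' : b' ≠ 0 := by
    intro h
    apply ha'
    have hz : ∀ x, ⟪a', x⟫ = 0 := by intro x; rw [hfun x, h, zero_mul]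
    have := hz a'
    rwa [inner_self_eq_zero] at this
  ext x
  simp only [hyp, Set.mem_setOf_eq]
  rw [hfun x]
  constructor
  · intro h
    field_simp at h
    exact h
  · intro h; rw [h, mul_one]

end Aux

/-- The `2k` points `p_{1u_1}, p_{1ū_1}, …, p_{ku_k}, p_{kū_k}` are affinely independent;
consequently there is a unique affine hyperplane `H(u_1,…,u_k)` containing all of them. -/
theorem boundaryPts_affineIndependent (n k : ℕ) (hn : 4 ≤ n) (hneven : Even n)
    (hk : 1 ≤ k) (U : Fin k → ℕ) (hU : ∀ m, U m ∈ Finset.Icc 1 n) :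
    AffineIndependent ℝ (boundaryPts n k U)
    ∧ ∃! H : Set (EuclideanSpace ℝ (Fin (2 * k))),
        (∃ (a : EuclideanSpace ℝ (Fin (2 * k))) (b : ℝ), a ≠ 0 ∧ H = hyp a b)
        ∧ ∀ m : Fin (2 * k), boundaryPts n k U m ∈ H := by
  refine main_of_linearIndependent k hk (boundaryPts n k U) ?_
  exact boundaryPts_linearIndependent n k hn hneven U hU
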